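/- There exists a constant c > 0 such that for every such H₁ and every t ∈ ℝ, ‖u₁(·,t)‖_{L²(0,∞)} ≤ c ‖H₁‖_{L²(ℝ)}. -/

import Mathlib

open MeasureTheory Complex

/-- Fourier transform with the convention `ĥ(k) = ∫_ℝ e^{−ikτ} h(τ) dτ`. -/
noncomputable def fourierT (h : ℝ → ℂ) (k : ℝ) : ℂ :=
  ∫ τ : ℝ, Complex.exp (-(Complex.I * (k : ℂ) * (τ : ℂ))) * h τ

/-- `u₁(x,t) = ∫₀^∞ e^{−kx + ik²t} Ĥ₁(k) dk`. -/
noncomputable def uOne (H₁ : ℝ → ℂ) (x t : ℝ) : ℂ :=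
  ∫ k in Set.Ioi (0:ℝ),
    Complex.exp (-(k : ℂ) * (x : ℂ) + Complex.I * (k : ℂ) ^ 2 * (t : ℂ)) * fourierT H₁ k

open SchwartzMap
open scoped Real FourierTransform ENNReal

lemma gamma_half {b : ℝ} (hb : 0 < b) :
    ∫ s in Set.Ioi (0:ℝ), s ^ (-(1/2) : ℝ) * Real.exp (-(b * s))
      = Real.sqrt π * b ^ (-(1/2) : ℝ) := by
  have h1 : ∫ s in Set.Ioi (0:ℝ), s ^ (-(1/2) : ℝ) * Real.exp (-(b * s))
      = ∫ s in Set.Ioi (0:ℝ), s ^ (-(1/2) : ℝ) * Real.exp (-b * s ^ (1:ℝ)) := by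
    refine setIntegral_congr_fun measurableSet_Ioi fun s hs => ?_
    rw [Real.rpow_one]; ring_nf
  rw [h1, integral_rpow_mul_exp_neg_mul_rpow one_pos (by norm_num) hb]
  norm_num [Real.Gamma_one_half_eq]
  ring

lemma integrable_gamma_half {b : ℝ} (hb : 0 < b) :
    IntegrableOn (fun s : ℝ => s ^ (-(1/2) : ℝ) * Real.exp (-(b * s))) (Set.Ioi 0) := by
  have h := integrableOn_rpow_mul_exp_neg_mul_rpow (by norm_num : (-1:ℝ) < -(1/2)) (one_pos : (0:ℝ) < 1) hb
  refine h.congr_fun (fun s hs => ?_) measurableSet_Ioi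
  dsimp only
  rw [Real.rpow_one]; ring_nf

lemma lintegral_gamma_half {b : ℝ} (hb : 0 < b) :
    ∫⁻ s in Set.Ioi (0:ℝ),
        ENNReal.ofReal (Real.exp (-(b * s))) * ENNReal.ofReal s ^ (-(1/2) : ℝ)
      = ENNReal.ofReal (Real.sqrt π) * ENNReal.ofReal b ^ (-(1/2) : ℝ) := by
  have h1 : ∫⁻ s in Set.Ioi (0:ℝ),
        ENNReal.ofReal (Real.exp (-(b * s))) * ENNReal.ofReal s ^ (-(1/2) : ℝ)
      = ∫⁻ s in Set.Ioi (0:ℝ), ENNReal.ofReal (s ^ (-(1/2) : ℝ) * Real.exp (-(b * s))) := by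
    refine setLIntegral_congr_fun measurableSet_Ioi (fun s hs => ?_)
    rw [ENNReal.ofReal_rpow_of_pos hs, ENNReal.ofReal_mul (Real.rpow_nonneg hs.le _), mul_comm]
  rw [h1, ← ofReal_integral_eq_lintegral_ofReal (integrable_gamma_half hb)
      (ae_restrict_of_forall_mem measurableSet_Ioi fun s hs => mul_nonneg (Real.rpow_nonneg (le_of_lt hs) _) (Real.exp_pos _).le),
    gamma_half hb, ENNReal.ofReal_mul (Real.sqrt_nonneg _),
    ENNReal.ofReal_rpow_of_pos hb]

lemma laplace_sq_bound (ψ : ℝ → ℝ≥0∞) (hψ : Measurable ψ) :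
    (∫⁻ x in Set.Ioi (0:ℝ),
        (∫⁻ k in Set.Ioi (0:ℝ), ENNReal.ofReal (Real.exp (-(k * x))) * ψ k) ^ (2:ℝ))
      ≤ ENNReal.ofReal π * ∫⁻ k in Set.Ioi (0:ℝ), ψ k ^ (2:ℝ) := by
  classical
  set C : ℝ → ℝ≥0∞ :=
    fun x => ENNReal.ofReal (Real.sqrt π) * ENNReal.ofReal x ^ (-(1/2):ℝ) with hCdef
  set D : ℝ → ℝ≥0∞ := fun x => ∫⁻ k in Set.Ioi (0:ℝ),
      ENNReal.ofReal (Real.exp (-(k * x))) * ENNReal.ofReal k ^ ((1:ℝ)/2) * ψ k ^ (2:ℝ) with hDdef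
  have conj2 : Real.HolderConjugate 2 2 := Real.HolderConjugate.two_two
  -- pointwise Cauchy-Schwarz
  have hCS : ∀ x ∈ Set.Ioi (0:ℝ),
      (∫⁻ k in Set.Ioi (0:ℝ), ENNReal.ofReal (Real.exp (-(k * x))) * ψ k) ^ (2:ℝ)
        ≤ C x * D x := by
    intro x hx
    set f : ℝ → ℝ≥0∞ := fun k =>
      ENNReal.ofReal (Real.exp (-(k * x))) ^ (2⁻¹:ℝ) * ENNReal.ofReal k ^ (-(4⁻¹):ℝ) with hfdef
    set g : ℝ → ℝ≥0∞ := fun k =>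
      ENNReal.ofReal (Real.exp (-(k * x))) ^ (2⁻¹:ℝ) * (ENNReal.ofReal k ^ ((4⁻¹):ℝ) * ψ k)
      with hgdef
    have hexp_meas : Measurable fun k : ℝ => ENNReal.ofReal (Real.exp (-(k * x))) :=
      ENNReal.measurable_ofReal.comp
        (Real.continuous_exp.comp (continuous_id.mul continuous_const).neg).measurable
    have hf_meas : Measurable f :=
      (hexp_meas.pow measurable_const).mul
        ((ENNReal.measurable_ofReal.pow measurable_const))
    have hg_meas : Measurable g :=
      (hexp_meas.pow measurable_const).mul
        ((ENNReal.measurable_ofReal.pow measurable_const).mul hψ)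
    have hfg : ∫⁻ k in Set.Ioi (0:ℝ), ENNReal.ofReal (Real.exp (-(k * x))) * ψ k
        = ∫⁻ k in Set.Ioi (0:ℝ), (f * g) k := by
      refine setLIntegral_congr_fun measurableSet_Ioi (
        fun k hk => ?_)
      have hk' : (0:ℝ) < k := hk
      have e0 : ENNReal.ofReal (Real.exp (-(k * x))) ≠ 0 :=
        (ENNReal.ofReal_pos.mpr (Real.exp_pos _)).ne'
      have c0 : ENNReal.ofReal k ≠ 0 := (ENNReal.ofReal_pos.mpr hk').ne'
      have h1 : ENNReal.ofReal (Real.exp (-(k * x))) ^ (2⁻¹:ℝ)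
          * ENNReal.ofReal (Real.exp (-(k * x))) ^ (2⁻¹:ℝ)
          = ENNReal.ofReal (Real.exp (-(k * x))) := by
        rw [← ENNReal.rpow_add _ _ e0 ENNReal.ofReal_ne_top]
        norm_num
      have h2 : ENNReal.ofReal k ^ (-(4⁻¹):ℝ) * ENNReal.ofReal k ^ ((4⁻¹):ℝ) = 1 := by
        rw [← ENNReal.rpow_add _ _ c0 ENNReal.ofReal_ne_top]
        norm_num
      calc ENNReal.ofReal (Real.exp (-(k * x))) * ψ k
          = (ENNReal.ofReal (Real.exp (-(k * x))) ^ (2⁻¹:ℝ)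
              * ENNReal.ofReal (Real.exp (-(k * x))) ^ (2⁻¹:ℝ))
            * ((ENNReal.ofReal k ^ (-(4⁻¹):ℝ) * ENNReal.ofReal k ^ ((4⁻¹):ℝ)) * ψ k) := by
            rw [h1, h2]; ring
        _ = (f * g) k := by simp only [hfdef, hgdef, Pi.mul_apply]; ring
    have hH := ENNReal.lintegral_mul_le_Lp_mul_Lq (volume.restrict (Set.Ioi (0:ℝ))) conj2
      hf_meas.aemeasurable hg_meas.aemeasurable
    have hfsq : ∫⁻ k in Set.Ioi (0:ℝ), f k ^ (2:ℝ) = C x := by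
      have : ∫⁻ k in Set.Ioi (0:ℝ), f k ^ (2:ℝ)
          = ∫⁻ k in Set.Ioi (0:ℝ),
              ENNReal.ofReal (Real.exp (-(x * k))) * ENNReal.ofReal k ^ (-(1/2):ℝ) := by
        refine setLIntegral_congr_fun measurableSet_Ioi (
          fun k hk => ?_)
        rw [hfdef]
        rw [ENNReal.mul_rpow_of_nonneg _ _ (by norm_num : (0:ℝ) ≤ 2),
          ← ENNReal.rpow_mul, ← ENNReal.rpow_mul, mul_comm k x]
        norm_num
      rw [this, lintegral_gamma_half hx]
    have hgsq : ∫⁻ k in Set.Ioi (0:ℝ), g k ^ (2:ℝ) = D x := by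
      refine setLIntegral_congr_fun measurableSet_Ioi (
        fun k hk => ?_)
      rw [hgdef]
      rw [ENNReal.mul_rpow_of_nonneg _ _ (by norm_num : (0:ℝ) ≤ 2),
        ENNReal.mul_rpow_of_nonneg _ _ (by norm_num : (0:ℝ) ≤ 2),
        ← ENNReal.rpow_mul, ← ENNReal.rpow_mul]
      norm_num [mul_assoc]
    calc (∫⁻ k in Set.Ioi (0:ℝ), ENNReal.ofReal (Real.exp (-(k * x))) * ψ k) ^ (2:ℝ)
        = (∫⁻ k in Set.Ioi (0:ℝ), (f * g) k) ^ (2:ℝ) := by rw [hfg]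
      _ ≤ ((∫⁻ k in Set.Ioi (0:ℝ), f k ^ (2:ℝ)) ^ ((1:ℝ)/2)
            * (∫⁻ k in Set.Ioi (0:ℝ), g k ^ (2:ℝ)) ^ ((1:ℝ)/2)) ^ (2:ℝ) :=
          ENNReal.rpow_le_rpow hH (by norm_num)
      _ = C x * D x := by
          rw [ENNReal.mul_rpow_of_nonneg _ _ (by norm_num : (0:ℝ) ≤ 2),
            ← ENNReal.rpow_mul, ← ENNReal.rpow_mul, hfsq, hgsq]
          norm_num
  -- the product kernel
  set F : ℝ → ℝ → ℝ≥0∞ := fun x k =>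
    (ENNReal.ofReal k ^ ((1:ℝ)/2) * ψ k ^ (2:ℝ))
      * (ENNReal.ofReal (Real.exp (-(k * x))) * ENNReal.ofReal x ^ (-(1/2):ℝ)) with hFdef
  have hF_meas : Measurable (Function.uncurry F) := by
    apply Measurable.mul
    · exact ((ENNReal.measurable_ofReal.comp measurable_snd).pow measurable_const).mul
        ((hψ.comp measurable_snd).pow measurable_const)
    · exact (ENNReal.measurable_ofReal.comp
        ((Real.continuous_exp.comp (continuous_snd.mul continuous_fst).neg).measurable)).mul
        ((ENNReal.measurable_ofReal.comp measurable_fst).pow measurable_const)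
  have e1 : ∀ x ∈ Set.Ioi (0:ℝ), C x * D x
      = ENNReal.ofReal (Real.sqrt π) * ∫⁻ k in Set.Ioi (0:ℝ), F x k := by
    intro x hx
    have hxfin : ENNReal.ofReal x ^ (-(1/2):ℝ) ≠ ⊤ := by
      rw [ENNReal.ofReal_rpow_of_pos hx]; exact ENNReal.ofReal_ne_top
    have : ENNReal.ofReal x ^ (-(1/2):ℝ) * D x = ∫⁻ k in Set.Ioi (0:ℝ), F x k := by
      rw [hDdef, ← lintegral_const_mul' _ _ hxfin]
      refine setLIntegral_congr_fun measurableSet_Ioi (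
        fun k hk => ?_)
      rw [hFdef]; ring
    rw [hCdef, mul_assoc, this]
  have e2 : ∫⁻ x in Set.Ioi (0:ℝ), C x * D x
      = ENNReal.ofReal (Real.sqrt π)
        * ∫⁻ x in Set.Ioi (0:ℝ), ∫⁻ k in Set.Ioi (0:ℝ), F x k := by
    rw [← lintegral_const_mul' _ _ ENNReal.ofReal_ne_top]
    exact setLIntegral_congr_fun measurableSet_Ioi e1
  have e3 : ∫⁻ x in Set.Ioi (0:ℝ), ∫⁻ k in Set.Ioi (0:ℝ), F x k
      = ∫⁻ k in Set.Ioi (0:ℝ), ∫⁻ x in Set.Ioi (0:ℝ), F x k :=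
    lintegral_lintegral_swap hF_meas.aemeasurable
  have e4 : ∀ k ∈ Set.Ioi (0:ℝ), (∫⁻ x in Set.Ioi (0:ℝ), F x k)
      = ENNReal.ofReal (Real.sqrt π) * ψ k ^ (2:ℝ) := by
    intro k hk
    have hxmeas : Measurable fun x : ℝ =>
        ENNReal.ofReal (Real.exp (-(k * x))) * ENNReal.ofReal x ^ (-(1/2):ℝ) :=
      (ENNReal.measurable_ofReal.comp
        (Real.continuous_exp.comp (continuous_const.mul continuous_id).neg).measurable).mul
        (ENNReal.measurable_ofReal.pow measurable_const)
    have : (∫⁻ x in Set.Ioi (0:ℝ), F x k)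
        = (ENNReal.ofReal k ^ ((1:ℝ)/2) * ψ k ^ (2:ℝ))
          * (ENNReal.ofReal (Real.sqrt π) * ENNReal.ofReal k ^ (-(1/2):ℝ)) := by
      rw [hFdef, lintegral_const_mul _ hxmeas, lintegral_gamma_half hk]
    rw [this]
    have c0 : ENNReal.ofReal k ≠ 0 := (ENNReal.ofReal_pos.mpr hk).ne'
    have h2 : ENNReal.ofReal k ^ ((1:ℝ)/2) * ENNReal.ofReal k ^ (-(1/2):ℝ) = 1 := by
      rw [← ENNReal.rpow_add _ _ c0 ENNReal.ofReal_ne_top]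
      norm_num
    calc (ENNReal.ofReal k ^ ((1:ℝ)/2) * ψ k ^ (2:ℝ))
          * (ENNReal.ofReal (Real.sqrt π) * ENNReal.ofReal k ^ (-(1/2):ℝ))
        = (ENNReal.ofReal k ^ ((1:ℝ)/2) * ENNReal.ofReal k ^ (-(1/2):ℝ))
            * (ENNReal.ofReal (Real.sqrt π) * ψ k ^ (2:ℝ)) := by ring
      _ = ENNReal.ofReal (Real.sqrt π) * ψ k ^ (2:ℝ) := by rw [h2, one_mul]
  calc (∫⁻ x in Set.Ioi (0:ℝ),
        (∫⁻ k in Set.Ioi (0:ℝ), ENNReal.ofReal (Real.exp (-(k * x))) * ψ k) ^ (2:ℝ))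
      ≤ ∫⁻ x in Set.Ioi (0:ℝ), C x * D x :=
        lintegral_mono_ae (ae_restrict_of_forall_mem measurableSet_Ioi hCS)
    _ = ENNReal.ofReal (Real.sqrt π)
        * ∫⁻ k in Set.Ioi (0:ℝ), ∫⁻ x in Set.Ioi (0:ℝ), F x k := by rw [e2, e3]
    _ = ENNReal.ofReal (Real.sqrt π)
        * ∫⁻ k in Set.Ioi (0:ℝ), ENNReal.ofReal (Real.sqrt π) * ψ k ^ (2:ℝ) := by
        rw [setLIntegral_congr_fun measurableSet_Ioi e4]
    _ = ENNReal.ofReal π * ∫⁻ k in Set.Ioi (0:ℝ), ψ k ^ (2:ℝ) := by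
        rw [lintegral_const_mul' _ _ ENNReal.ofReal_ne_top, ← mul_assoc,
          ← ENNReal.ofReal_mul (Real.sqrt_nonneg _), Real.mul_self_sqrt Real.pi_pos.le]

lemma fourierT_eq (h : ℝ → ℂ) (k : ℝ) :
    fourierT h k = 𝓕 h (k / (2 * π)) := by
  rw [Real.fourier_eq', fourierT]
  congr 1
  ext τ
  have hinner : (inner ℝ τ (k / (2 * π)) : ℝ) = τ * (k / (2 * π)) := by
    simp only [RCLike.inner_apply, conj_trivial]; ring
  rw [hinner, smul_eq_mul]
  congr 1
  have h1 : (-2 * π * (τ * (k / (2 * π))) : ℝ) = -(k * τ) := by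
    field_simp
  rw [h1]
  push_cast
  ring

lemma plancherel_schwartz (f : SchwartzMap ℝ ℂ) :
    ∫ ξ : ℝ, ‖𝓕 (⇑f) ξ‖ ^ 2 = ∫ x : ℝ, ‖f x‖ ^ 2 := by
  have hFc : ⇑(fourierTransformCLM ℝ f) = 𝓕 (⇑f) := by
    simp [fourierTransformCLM_apply, fourier_coe]
  exact SchwartzMap.integral_norm_sq_fourier f

lemma schwartz_sq_norm_integrable (g : SchwartzMap ℝ ℂ) :
    Integrable (fun x => ‖g x‖ ^ 2) := by
  have hb : ∀ x : ℝ, ‖g x‖ ≤ SchwartzMap.seminorm ℝ 0 0 g := by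
    intro x
    have := SchwartzMap.le_seminorm ℝ 0 0 g x
    simpa using this
  refine ((g.integrable.norm.const_mul (SchwartzMap.seminorm ℝ 0 0 g)).mono'
    ((g.continuous.norm.pow 2).aestronglyMeasurable) ?_)
  refine Filter.Eventually.of_forall fun x => ?_
  have h0 : (0:ℝ) ≤ ‖g x‖ := norm_nonneg _
  have : ‖g x‖ ^ 2 = ‖g x‖ * ‖g x‖ := sq ‖g x‖
  rw [Real.norm_of_nonneg (by positivity), this]
  exact mul_le_mul_of_nonneg_right (hb x) h0

lemma lintegral_sq_eq (g : ℝ → ℂ) (hg : Integrable (fun x => ‖g x‖ ^ 2)) :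
    ∫⁻ x : ℝ, (‖g x‖₊ : ENNReal) ^ (2:ℝ) = ENNReal.ofReal (∫ x : ℝ, ‖g x‖ ^ 2) := by
  rw [ofReal_integral_eq_lintegral_ofReal hg
    (Filter.Eventually.of_forall fun x => by positivity)]
  congr 1
  ext x
  rw [← enorm_eq_nnnorm, ← ofReal_norm,
    ENNReal.ofReal_rpow_of_nonneg (norm_nonneg _) (by norm_num : (0:ℝ) ≤ 2)]
  norm_num [Real.rpow_natCast]

lemma plancherel_schwartz_lintegral (f : SchwartzMap ℝ ℂ) :
    ∫⁻ ξ : ℝ, (‖𝓕 (⇑f) ξ‖₊ : ENNReal) ^ (2:ℝ) = ∫⁻ x : ℝ, (‖f x‖₊ : ENNReal) ^ (2:ℝ) := by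
  have hFc : ⇑(fourierTransformCLM ℝ f) = 𝓕 (⇑f) := by
    simp [fourierTransformCLM_apply, fourier_coe]
  have hFint2 : Integrable (fun ξ => ‖𝓕 (⇑f) ξ‖ ^ 2) := by
    rw [← hFc]; exact schwartz_sq_norm_integrable _
  rw [lintegral_sq_eq _ hFint2, lintegral_sq_eq _ (schwartz_sq_norm_integrable f),
    plancherel_schwartz f]

/-- The `L² → L²` bound: for Schwartz `H₁` whose Fourier transform vanishes on `(−∞,0)`,
`‖u₁(·,t)‖_{L²(0,∞)} ≤ c ‖H₁‖_{L²(ℝ)}` for every `t ∈ ℝ`. -/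
theorem uOne_L2_estimate :
    ∃ c : ℝ, 0 < c ∧ ∀ H₁ : SchwartzMap ℝ ℂ,
      (∀ k : ℝ, k < 0 → fourierT (fun τ => H₁ τ) k = 0) →
      ∀ t : ℝ,
        eLpNorm (fun x => uOne (fun τ => H₁ τ) x t) 2 (volume.restrict (Set.Ioi (0:ℝ)))
          ≤ ENNReal.ofReal c * eLpNorm (fun τ => H₁ τ) 2 volume := by
  refine ⟨Real.sqrt (π * (2 * π)), Real.sqrt_pos.mpr (by positivity), fun H₁ _ t => ?_⟩
  set g : ℝ → ℂ := fourierT (fun τ => H₁ τ) with hg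
  set ψ : ℝ → ℝ≥0∞ := fun k => (‖g k‖₊ : ℝ≥0∞) with hψdef
  -- continuity of g
  have hFc : ⇑(fourierTransformCLM ℝ H₁) = 𝓕 (⇑H₁) := by
    simp [fourierTransformCLM_apply, fourier_coe]
  have hgcont : Continuous g := by
    have : g = fun k => 𝓕 (⇑H₁) (k / (2 * π)) := funext fun k => fourierT_eq _ k
    rw [this, ← hFc]
    exact (fourierTransformCLM ℝ H₁).continuous.comp (continuous_id.div_const _)
  have hψmeas : Measurable ψ := hgcont.measurable.nnnorm.coe_nnreal_ennreal
  -- pointwise bound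
  have hpt : ∀ x : ℝ, (‖uOne (fun τ => H₁ τ) x t‖₊ : ℝ≥0∞)
      ≤ ∫⁻ k in Set.Ioi (0:ℝ), ENNReal.ofReal (Real.exp (-(k * x))) * ψ k := by
    intro x
    refine le_trans (enorm_integral_le_lintegral_enorm _) (le_of_eq ?_)
    refine setLIntegral_congr_fun measurableSet_Ioi (
      fun k hk => ?_)
    rw [enorm_mul]
    congr 1
    have hre : (-(k:ℂ) * (x:ℂ) + Complex.I * (k:ℂ)^2 * (t:ℂ)).re = -(k * x) := by simp [← Complex.ofReal_pow]
    rw [← ofReal_norm, Complex.norm_exp, hre]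
  -- L² norms as lintegrals
  have h2 : (2:ℝ≥0∞) ≠ 0 := by norm_num
  have h2' : (2:ℝ≥0∞) ≠ ∞ := by norm_num
  have htoReal : (2:ℝ≥0∞).toReal = (2:ℝ) := by norm_num
  rw [eLpNorm_eq_lintegral_rpow_enorm_toReal h2 h2', eLpNorm_eq_lintegral_rpow_enorm_toReal h2 h2',
    htoReal]
  -- main chain
  have step1 : (∫⁻ x in Set.Ioi (0:ℝ), (‖uOne (fun τ => H₁ τ) x t‖₊ : ℝ≥0∞) ^ (2:ℝ))
      ≤ ENNReal.ofReal π * ∫⁻ k in Set.Ioi (0:ℝ), ψ k ^ (2:ℝ) := by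
    refine le_trans ?_ (laplace_sq_bound ψ hψmeas)
    exact lintegral_mono fun x => ENNReal.rpow_le_rpow (hpt x) (by norm_num)
  have step2 : (∫⁻ k in Set.Ioi (0:ℝ), ψ k ^ (2:ℝ)) ≤ ∫⁻ k : ℝ, ψ k ^ (2:ℝ) :=
    setLIntegral_le_lintegral _ _
  -- scaling + Plancherel
  have step3 : (∫⁻ k : ℝ, ψ k ^ (2:ℝ))
      = ENNReal.ofReal (2 * π) * ∫⁻ x : ℝ, (‖H₁ x‖₊ : ℝ≥0∞) ^ (2:ℝ) := by
    have hG : Measurable fun w : ℝ => (‖𝓕 (⇑H₁) w‖₊ : ℝ≥0∞) ^ (2:ℝ) := by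
      have : Continuous (𝓕 (⇑H₁)) := by rw [← hFc]; exact (fourierTransformCLM ℝ H₁).continuous
      exact (this.measurable.nnnorm.coe_nnreal_ennreal).pow measurable_const
    have hc : ((2 * π)⁻¹ : ℝ) ≠ 0 := by positivity
    have e1 : (∫⁻ k : ℝ, ψ k ^ (2:ℝ))
        = ∫⁻ k : ℝ, (‖𝓕 (⇑H₁) ((2 * π)⁻¹ * k)‖₊ : ℝ≥0∞) ^ (2:ℝ) := by
      refine lintegral_congr fun k => ?_
      show (‖fourierT (fun τ => H₁ τ) k‖₊ : ℝ≥0∞) ^ (2:ℝ) = _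
      rw [fourierT_eq, div_eq_inv_mul]
    have e2 : ∫⁻ k : ℝ, (‖𝓕 (⇑H₁) ((2 * π)⁻¹ * k)‖₊ : ℝ≥0∞) ^ (2:ℝ)
        = ∫⁻ w : ℝ, (‖𝓕 (⇑H₁) w‖₊ : ℝ≥0∞) ^ (2:ℝ) ∂(Measure.map ((2 * π)⁻¹ * ·) volume) :=
      (lintegral_map hG (measurable_const_mul _)).symm
    rw [e1, e2, Real.map_volume_mul_left hc, lintegral_smul_measure,
      plancherel_schwartz_lintegral H₁]
    congr 2
    rw [inv_inv, abs_of_pos (by positivity)]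
  calc (∫⁻ x in Set.Ioi (0:ℝ), (‖uOne (fun τ => H₁ τ) x t‖₊ : ℝ≥0∞) ^ (2:ℝ)) ^ ((1:ℝ)/2)
      ≤ (ENNReal.ofReal π * (ENNReal.ofReal (2 * π)
          * ∫⁻ x : ℝ, (‖H₁ x‖₊ : ℝ≥0∞) ^ (2:ℝ))) ^ ((1:ℝ)/2) := by
        refine ENNReal.rpow_le_rpow ?_ (by norm_num)
        refine le_trans step1 ?_
        rw [← step3]
        exact mul_le_mul_right step2 _
    _ = ENNReal.ofReal (Real.sqrt (π * (2 * π)))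
        * (∫⁻ x : ℝ, (‖H₁ x‖₊ : ℝ≥0∞) ^ (2:ℝ)) ^ ((1:ℝ)/2) := by
        rw [← mul_assoc, ← ENNReal.ofReal_mul Real.pi_pos.le,
          ENNReal.mul_rpow_of_nonneg _ _ (by norm_num : (0:ℝ) ≤ 1/2),
          ENNReal.ofReal_rpow_of_nonneg (by positivity) (by norm_num : (0:ℝ) ≤ 1/2),
          ← Real.sqrt_eq_rpow]
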